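/- Let (B, B̂, ι) be an arch such that B̂ satisfies (sur) and B admits an elimination ε. Then for every nonempty index set I and theories Rᵢ ⊆ L̂₁ (i ∈ I): (T₂ ∪ ι(⋂ᵢ (T₁ ∪ Rᵢ)^⊢ ∩ L₁))^⊢ ∩ L₂ = (T₂ ∪ ι(⋂ᵢ (T₁ ∪ Rᵢ)^⊢ ∩ L̂₁))^⊢ ∩ L₂ = ⋂ᵢ (T₂ ∪ ιRᵢ)^⊢ ∩ L₂. In particular, for every R ⊆ L̂₁: (T₂ ∪ ι((T₁ ∪ R)^⊢ ∩ L₁))^⊢ ∩ L₂ = (T₂ ∪ ιR)^⊢ ∩ L₂. -/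
import Mathlib

open FirstOrder Set

universe u v w u₁ v₁ u₂ v₂

namespace PaperStmt

/-- An `𝔏`-fragment: a set of `𝔏`-sentences containing `⊤` and `⊥` and
closed under `∧` and `∨`. -/
def IsFragment {L : FirstOrder.Language.{u, v}} (F : Set L.Sentence) : Prop :=
  (⊤ : L.Sentence) ∈ F ∧ (⊥ : L.Sentence) ∈ F ∧
    ∀ φ ψ : L.Sentence, φ ∈ F → ψ ∈ F → (φ ⊓ ψ) ∈ F ∧ (φ ⊔ ψ) ∈ F

/-- `T_F = T^⊢ ∩ F`: the consequences of the theory `T` that lie in the fragment `F`. -/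
def cons {L : FirstOrder.Language.{u, v}} (T : L.Theory) (F : Set L.Sentence) :
    Set L.Sentence :=
  {φ | φ ∈ F ∧ T ⊨ᵇ φ}

/-- Bundled models of `T` (in the universe matching semantic consequence `⊨ᵇ`). -/
abbrev Mod {L : FirstOrder.Language.{u, v}} (T : L.Theory) : Type (max u v + 1) :=
  FirstOrder.Language.Theory.ModelType.{u, v, max u v} T

/-- `Th_F(M)`: the sentences in the fragment `F` true in the model `M`. -/
def th {L : FirstOrder.Language.{u, v}} {T : L.Theory} (F : Set L.Sentence) (M : Mod T) :
    Set L.Sentence :=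
  {φ | φ ∈ F ∧ M ⊨ φ}

open FirstOrder.Language FirstOrder.Language.Theory

lemma models_mono {L : FirstOrder.Language.{u, v}} {T T' : L.Theory} (h : T ⊆ T')
    {φ : L.Sentence} (hφ : T ⊨ᵇ φ) : T' ⊨ᵇ φ := by
  rw [models_sentence_iff] at *
  intro M
  exact hφ (M.subtheoryModel h)

theorem aux19 {L₁ : FirstOrder.Language.{u₁, v₁}} {L₂ : FirstOrder.Language.{u₂, v₂}}
    {F₁ Fh₁ : Set L₁.Sentence} {F₂ : Set L₂.Sentence} {T₁ : L₁.Theory} {T₂ : L₂.Theory}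
    (hsub₁ : F₁ ⊆ Fh₁)
    (σ : Mod T₂ → Mod T₁) (ι : L₁.Sentence → L₂.Sentence)
    (hι : ∀ φ ∈ Fh₁, ∀ M : Mod T₂, (σ M ⊨ φ ↔ M ⊨ ι φ))
    (hsur : ∀ N : Mod T₁, ∃ M : Mod T₂, th Fh₁ N = th Fh₁ (σ M))
    (ε : L₂.Sentence → L₁.Sentence) (hεF : ∀ ψ ∈ F₂, ε ψ ∈ F₁)
    (hε : ∀ ψ ∈ F₂, ∀ M : Mod T₂, (σ M ⊨ ε ψ ↔ M ⊨ ψ))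
    {I : Type w} [Nonempty I] (R : I → Set L₁.Sentence) (hR : ∀ i, R i ⊆ Fh₁) :
    cons (T₂ ∪ ι '' (⋂ i, cons (T₁ ∪ R i) F₁)) F₂ =
        cons (T₂ ∪ ι '' (⋂ i, cons (T₁ ∪ R i) Fh₁)) F₂ ∧
      cons (T₂ ∪ ι '' (⋂ i, cons (T₁ ∪ R i) Fh₁)) F₂ = ⋂ i, cons (T₂ ∪ ι '' R i) F₂ := by
  -- A ⊆ B
  have hAB : cons (T₂ ∪ ι '' (⋂ i, cons (T₁ ∪ R i) F₁)) F₂ ⊆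
      cons (T₂ ∪ ι '' (⋂ i, cons (T₁ ∪ R i) Fh₁)) F₂ := by
    rintro φ ⟨hφF, hφm⟩
    refine ⟨hφF, models_mono (union_subset_union_right _ (image_mono (iInter_mono fun i => ?_))) hφm⟩
    rintro x ⟨hx, hm⟩
    exact ⟨hsub₁ hx, hm⟩
  -- B ⊆ C
  have hBC : cons (T₂ ∪ ι '' (⋂ i, cons (T₁ ∪ R i) Fh₁)) F₂ ⊆
      ⋂ i, cons (T₂ ∪ ι '' R i) F₂ := by
    rintro φ ⟨hφF, hφm⟩
    refine mem_iInter.2 fun i => ⟨hφF, ?_⟩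
    rw [models_sentence_iff]
    intro M'
    set M : Mod T₂ := M'.subtheoryModel subset_union_left with hM
    -- σ M satisfies R i
    have hσR : ∀ ψ ∈ R i, σ M ⊨ ψ := fun ψ hψ =>
      (hι ψ (hR i hψ) M).2 (realize_sentence_of_mem (T₂ ∪ ι '' R i) (mem_union_right _ ⟨ψ, hψ, rfl⟩))
    haveI hσmod : (σ M : Type (max u₁ v₁)) ⊨ T₁ ∪ R i :=
      Theory.model_union_iff.2 ⟨(σ M).is_model, (Theory.model_iff _).2 hσR⟩
    -- M satisfies the big theory
    haveI hMbig : (M : Type (max u₂ v₂)) ⊨ T₂ ∪ ι '' (⋂ i, cons (T₁ ∪ R i) Fh₁) := by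
      refine Theory.model_union_iff.2 ⟨M.is_model, (Theory.model_iff _).2 ?_⟩
      rintro χ ⟨ψ, hψ, rfl⟩
      have hψi := mem_iInter.1 hψ i
      have hσψ : σ M ⊨ ψ :=
        models_sentence_iff.1 hψi.2 (ModelType.of (T₁ ∪ R i) (σ M))
      exact (hι ψ hψi.1 M).1 hσψ
    exact models_sentence_iff.1 hφm (ModelType.of _ (M : Type (max u₂ v₂)))
  -- C ⊆ A
  have hCA : (⋂ i, cons (T₂ ∪ ι '' R i) F₂) ⊆
      cons (T₂ ∪ ι '' (⋂ i, cons (T₁ ∪ R i) F₁)) F₂ := by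
    intro φ hφ
    have hφF : φ ∈ F₂ := (mem_iInter.1 hφ (Classical.arbitrary I)).1
    refine ⟨hφF, ?_⟩
    have hεmem : ∀ i, (T₁ ∪ R i) ⊨ᵇ ε φ := by
      intro i
      rw [models_sentence_iff]
      intro N'
      set N : Mod T₁ := N'.subtheoryModel subset_union_left with hN
      obtain ⟨M'', hth⟩ := hsur N
      have hσR : ∀ ψ ∈ R i, σ M'' ⊨ ψ := by
        intro ψ hψ
        have h1 : ψ ∈ th Fh₁ N :=
          ⟨hR i hψ, realize_sentence_of_mem (T₁ ∪ R i) (mem_union_right _ hψ)⟩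
        rw [hth] at h1
        exact h1.2
      haveI : (M'' : Type (max u₂ v₂)) ⊨ T₂ ∪ ι '' R i := by
        refine Theory.model_union_iff.2 ⟨M''.is_model, (Theory.model_iff _).2 ?_⟩
        rintro χ ⟨ψ, hψ, rfl⟩
        exact (hι ψ (hR i hψ) M'').1 (hσR ψ hψ)
      have hM''φ : M'' ⊨ φ :=
        models_sentence_iff.1 (mem_iInter.1 hφ i).2
          (ModelType.of (T₂ ∪ ι '' R i) (M'' : Type (max u₂ v₂)))
      have h2 : ε φ ∈ th Fh₁ (σ M'') := ⟨hsub₁ (hεF φ hφF), (hε φ hφF M'').2 hM''φ⟩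
      rw [← hth] at h2
      exact h2.2
    rw [models_sentence_iff]
    intro M'
    set M : Mod T₂ := M'.subtheoryModel subset_union_left with hM
    have hεcons : ε φ ∈ ⋂ i, cons (T₁ ∪ R i) F₁ :=
      mem_iInter.2 fun i => ⟨hεF φ hφF, hεmem i⟩
    have hMιε : M ⊨ ι (ε φ) :=
      realize_sentence_of_mem (T₂ ∪ ι '' (⋂ i, cons (T₁ ∪ R i) F₁))
        (mem_union_right _ ⟨ε φ, hεcons, rfl⟩)
    exact (hε φ hφF M).1 ((hι (ε φ) (hsub₁ (hεF φ hφF)) M).2 hMιε)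
  exact ⟨subset_antisymm hAB (hBC.trans hCA), subset_antisymm hBC (hCA.trans hAB)⟩

theorem statement_19 {L₁ : FirstOrder.Language.{u₁, v₁}} {L₂ : FirstOrder.Language.{u₂, v₂}}
    {F₁ Fh₁ : Set L₁.Sentence} {F₂ Fh₂ : Set L₂.Sentence} {T₁ : L₁.Theory} {T₂ : L₂.Theory}
    (hF₁ : IsFragment F₁) (hF₂ : IsFragment F₂) (hFh₁ : IsFragment Fh₁) (hFh₂ : IsFragment Fh₂)
    (hsub₁ : F₁ ⊆ Fh₁) (hsub₂ : F₂ ⊆ Fh₂)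
    (σ : Mod T₂ → Mod T₁)
    (ι : L₁.Sentence → L₂.Sentence)
    (hιFh : ∀ φ ∈ Fh₁, ι φ ∈ Fh₂) (hιF : ∀ φ ∈ F₁, ι φ ∈ F₂)
    (hι : ∀ φ ∈ Fh₁, ∀ M : Mod T₂, (σ M ⊨ φ ↔ M ⊨ ι φ))
    (hsur : ∀ N : Mod T₁, ∃ M : Mod T₂, th Fh₁ N = th Fh₁ (σ M))
    (ε : L₂.Sentence → L₁.Sentence) (hεF : ∀ ψ ∈ F₂, ε ψ ∈ F₁)
    (hε : ∀ ψ ∈ F₂, ∀ M : Mod T₂, (σ M ⊨ ε ψ ↔ M ⊨ ψ))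
    {I : Type*} [Nonempty I] (R : I → Set L₁.Sentence) (hR : ∀ i, R i ⊆ Fh₁) :
    (cons (T₂ ∪ ι '' (⋂ i, cons (T₁ ∪ R i) F₁)) F₂ =
        cons (T₂ ∪ ι '' (⋂ i, cons (T₁ ∪ R i) Fh₁)) F₂ ∧
      cons (T₂ ∪ ι '' (⋂ i, cons (T₁ ∪ R i) Fh₁)) F₂ = ⋂ i, cons (T₂ ∪ ι '' R i) F₂) ∧
    ∀ R' : Set L₁.Sentence, R' ⊆ Fh₁ →
      cons (T₂ ∪ ι '' cons (T₁ ∪ R') F₁) F₂ = cons (T₂ ∪ ι '' R') F₂ ∧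
      cons (T₂ ∪ ι '' cons (T₁ ∪ R') Fh₁) F₂ = cons (T₂ ∪ ι '' R') F₂ := by
  refine ⟨aux19 hsub₁ σ ι hι hsur ε hεF hε R hR, fun R' hR' => ?_⟩
  have h := aux19 hsub₁ σ ι hι hsur ε hεF hε (fun _ : I => R') (fun _ => hR')
  simp only [iInter_const] at h
  exact ⟨h.1.trans h.2, h.2⟩

end PaperStmt
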